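/- Let X be a compact complex manifold of dimension n with Hermitian metric g, let C^{•,•} ⊆ Λ^{•,•}X be a finite-dimensional sub-complex closed under ∗̄_g, and let B^{•,•} ⊆ C^{•,•} be a further sub-complex closed under ∗̄_g. If the inclusion B^{•,•} ↪ Λ^{•,•}X induces an isomorphism in Bott-Chern cohomology, then the inclusion C^{•,•} ↪ Λ^{•,•}X also induces an isomorphism in Bott-Chern cohomology. -/

import Mathlib

/-- The Bott-Chern Laplacian
`Δ̃^{BC} = (∂∂̄)(∂∂̄)* + (∂∂̄)*(∂∂̄) + (∂̄*∂)(∂̄*∂)* + (∂̄*∂)*(∂̄*∂) + ∂̄*∂̄ + ∂*∂`. -/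
def BCLap {V : Type*} [AddCommGroup V] [Module ℂ V]
    (d1 d2 d1s d2s : V →ₗ[ℂ] V) : V →ₗ[ℂ] V :=
  (d1 ∘ₗ d2) ∘ₗ (d2s ∘ₗ d1s) + (d2s ∘ₗ d1s) ∘ₗ (d1 ∘ₗ d2)
    + (d2s ∘ₗ d1) ∘ₗ (d1s ∘ₗ d2) + (d1s ∘ₗ d2) ∘ₗ (d2s ∘ₗ d1)
    + d2s ∘ₗ d2 + d1s ∘ₗ d1

set_option maxHeartbeats 1000000 in
open LinearMap in
lemma aux_inj {V : Type*} [NormedAddCommGroup V] [InnerProductSpace ℂ V]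
    (W : Submodule ℂ V) [FiniteDimensional ℂ W]
    (d1 d2 d1s d2s : V →ₗ[ℂ] V)
    (hd1d1 : d1 ∘ₗ d1 = 0) (hd2d2 : d2 ∘ₗ d2 = 0)
    (hanti : d1 ∘ₗ d2 + d2 ∘ₗ d1 = 0)
    (hadj1 : ∀ x y : V, (inner ℂ (d1 x) y : ℂ) = inner ℂ x (d1s y))
    (hadj2 : ∀ x y : V, (inner ℂ (d2 x) y : ℂ) = inner ℂ x (d2s y))
    (hW : ∀ x ∈ W, BCLap d1 d2 d1s d2s x ∈ W)
    (x : V) (hx : x ∈ W) (hx1 : d1 x = 0) (hx2 : d2 x = 0)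
    (y : V) (hxy : x = d1 (d2 y)) :
    ∃ z ∈ W, x = d1 (d2 (d2s (d1s z))) := by
  -- reversed adjunctions
  have hadj1' : ∀ a b : V, (inner ℂ (d1s a) b : ℂ) = inner ℂ a (d1 b) := by
    intro a b
    rw [← inner_conj_symm, ← hadj1, inner_conj_symm]
  have hadj2' : ∀ a b : V, (inner ℂ (d2s a) b : ℂ) = inner ℂ a (d2 b) := by
    intro a b
    rw [← inner_conj_symm, ← hadj2, inner_conj_symm]
  have h11 : ∀ a : V, d1 (d1 a) = 0 := fun a => by
    simpa using LinearMap.congr_fun hd1d1 a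
  have h22 : ∀ a : V, d2 (d2 a) = 0 := fun a => by
    simpa using LinearMap.congr_fun hd2d2 a
  have hanti' : ∀ a : V, d2 (d1 a) = -(d1 (d2 a)) := fun a => by
    have h := LinearMap.congr_fun hanti a
    simp only [LinearMap.add_apply, comp_apply, LinearMap.zero_apply] at h
    exact eq_neg_of_add_eq_zero_right h
  -- symmetry of the Laplacian
  have hsymm : ∀ a b : V,
      (inner ℂ (BCLap d1 d2 d1s d2s a) b : ℂ) = inner ℂ a (BCLap d1 d2 d1s d2s b) := by
    intro a b
    simp only [BCLap, LinearMap.add_apply, comp_apply, inner_add_left, inner_add_right,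
      hadj1, hadj2, hadj1', hadj2']
  set Δ := BCLap d1 d2 d1s d2s with hΔ
  set T : W →ₗ[ℂ] W := Δ.restrict hW with hT
  have hTapp : ∀ w : W, (T w : V) = Δ (w : V) := fun w => rfl
  -- ker ⊔ range = ⊤
  have hdisj : Disjoint (ker T) (range T) := by
    rw [Submodule.disjoint_def]
    rintro w hwk ⟨u, rfl⟩
    have h0 : Δ (Δ (u : V)) = 0 := congrArg Subtype.val (LinearMap.mem_ker.mp hwk)
    have h2 : (inner ℂ (Δ (u : V)) (Δ (u : V)) : ℂ) = 0 := by
      rw [hsymm, h0, inner_zero_right]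
    exact Subtype.ext (inner_self_eq_zero.mp h2)
  have hsup : ker T ⊔ range T = ⊤ := by
    apply Submodule.eq_top_of_finrank_eq
    have h1 := Submodule.finrank_sup_add_finrank_inf_eq (ker T) (range T)
    have h2 : ker T ⊓ range T = ⊥ := hdisj.eq_bot
    have h3 := LinearMap.finrank_range_add_finrank_ker T
    rw [h2] at h1
    simp only [finrank_bot] at h1
    omega
  -- decompose x
  obtain ⟨h, hhk, r, hr, hhr⟩ := Submodule.mem_sup.mp
    (hsup ▸ Submodule.mem_top : (⟨x, hx⟩ : W) ∈ ker T ⊔ range T)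
  obtain ⟨z, rfl⟩ := hr
  set hv : V := (h : V) with hhv
  set zv : V := ((z : W) : V) with hzv
  have hxdec : x = hv + Δ zv := by
    have := congrArg (Subtype.val) hhr
    simpa [hTapp] using this.symm
  have hΔh : Δ hv = 0 := by
    have : T h = 0 := hhk
    have := congrArg (Subtype.val) this
    rw [hTapp] at this
    simpa using this
  -- harmonic implies the six components vanish; we need d2s (d1s hv) = 0
  have t1 : (inner ℂ (d1 (d2 (d2s (d1s hv)))) hv : ℂ)
      = inner ℂ (d2s (d1s hv)) (d2s (d1s hv)) := by rw [hadj1, hadj2]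
  have t2 : (inner ℂ (d2s (d1s (d1 (d2 hv)))) hv : ℂ)
      = inner ℂ (d1 (d2 hv)) (d1 (d2 hv)) := by rw [hadj2', hadj1']
  have t3 : (inner ℂ (d2s (d1 (d1s (d2 hv)))) hv : ℂ)
      = inner ℂ (d1s (d2 hv)) (d1s (d2 hv)) := by rw [hadj2', hadj1]
  have t4 : (inner ℂ (d1s (d2 (d2s (d1 hv)))) hv : ℂ)
      = inner ℂ (d2s (d1 hv)) (d2s (d1 hv)) := by rw [hadj1', hadj2]
  have t5 : (inner ℂ (d2s (d2 hv)) hv : ℂ) = inner ℂ (d2 hv) (d2 hv) := by rw [hadj2']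
  have t6 : (inner ℂ (d1s (d1 hv)) hv : ℂ) = inner ℂ (d1 hv) (d1 hv) := by rw [hadj1']
  have esum : (0 : ℂ) = inner ℂ (d2s (d1s hv)) (d2s (d1s hv)) + inner ℂ (d1 (d2 hv)) (d1 (d2 hv))
      + inner ℂ (d1s (d2 hv)) (d1s (d2 hv)) + inner ℂ (d2s (d1 hv)) (d2s (d1 hv))
      + inner ℂ (d2 hv) (d2 hv) + inner ℂ (d1 hv) (d1 hv) := by
    have : (inner ℂ (Δ hv) hv : ℂ) = 0 := by rw [hΔh, inner_zero_left]
    rw [← this, hΔ]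
    simp only [BCLap, LinearMap.add_apply, comp_apply, inner_add_left, t1, t2, t3, t4, t5, t6]
  have hnorms : ‖d2s (d1s hv)‖^2 + ‖d1 (d2 hv)‖^2 + ‖d1s (d2 hv)‖^2 + ‖d2s (d1 hv)‖^2
      + ‖d2 hv‖^2 + ‖d1 hv‖^2 = (0:ℝ) := by
    have e2 := esum
    simp only [inner_self_eq_norm_sq_to_K] at e2
    exact RCLike.ofReal_eq_zero.mp (by push_cast; exact e2.symm)
  have hw1 : d2s (d1s hv) = 0 := by
    have h1 : ‖d2s (d1s hv)‖^2 = 0 := by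
      nlinarith [sq_nonneg ‖d1 (d2 hv)‖, sq_nonneg ‖d1s (d2 hv)‖, sq_nonneg ‖d2s (d1 hv)‖,
        sq_nonneg ‖d2 hv‖, sq_nonneg ‖d1 hv‖, sq_nonneg ‖d2s (d1s hv)‖]
    have := pow_eq_zero_iff (n := 2) (by norm_num) |>.mp h1
    exact norm_eq_zero.mp this
  have hxh : (inner ℂ x hv : ℂ) = 0 := by rw [hxy, hadj1, hadj2, hw1, inner_zero_right]
  have hh0 : hv = 0 := by
    have e : (inner ℂ hv hv : ℂ) = 0 := by
      have e1 : (inner ℂ hv hv : ℂ) = inner ℂ x hv - inner ℂ (Δ zv) hv := by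
        rw [hxdec, inner_add_left]; ring
      rw [e1, hxh, hsymm, hΔh, inner_zero_right]; ring
    exact inner_self_eq_zero.mp e
  have hxz : x = Δ zv := by rw [hxdec, hh0, zero_add]
  have hxsum : x = d1 (d2 (d2s (d1s zv))) + d2s (d1s (d1 (d2 zv))) + d2s (d1 (d1s (d2 zv)))
      + d1s (d2 (d2s (d1 zv))) + d2s (d2 zv) + d1s (d1 zv) := by
    rw [hxz, hΔ]; simp only [BCLap, LinearMap.add_apply, comp_apply]
  have hr1 : d1 (x - d1 (d2 (d2s (d1s zv)))) = 0 := by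
    rw [map_sub, hx1, h11, sub_zero]
  have hr2 : d2 (x - d1 (d2 (d2s (d1s zv)))) = 0 := by
    rw [map_sub, hx2, hanti', h22, map_zero, neg_zero, sub_zero]
  have hreq : x - d1 (d2 (d2s (d1s zv))) = d2s (d1s (d1 (d2 zv))) + d2s (d1 (d1s (d2 zv)))
      + d1s (d2 (d2s (d1 zv))) + d2s (d2 zv) + d1s (d1 zv) := by
    rw [hxsum]; abel
  have hadj1z : ∀ u : V, (inner ℂ (x - d1 (d2 (d2s (d1s zv)))) (d1s u) : ℂ) = 0 := fun u => by
    rw [← hadj1, hr1, inner_zero_left]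
  have hadj2z : ∀ u : V, (inner ℂ (x - d1 (d2 (d2s (d1s zv)))) (d2s u) : ℂ) = 0 := fun u => by
    rw [← hadj2, hr2, inner_zero_left]
  have hrr : (inner ℂ (x - d1 (d2 (d2s (d1s zv)))) (x - d1 (d2 (d2s (d1s zv)))) : ℂ) = 0 := by
    have e := congrArg (fun t => (inner ℂ (x - d1 (d2 (d2s (d1s zv)))) t : ℂ)) hreq
    rw [e]
    simp only [inner_add_right, hadj1z, hadj2z, add_zero, zero_add]
  have hr0 : x - d1 (d2 (d2s (d1s zv))) = 0 := inner_self_eq_zero.mp hrr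
  exact ⟨zv, (z : W).2, sub_eq_zero.mp hr0⟩

/-- Proposition subiso (Bott-Chern case): for a compact complex manifold `X` of complex
dimension `n` with Hermitian metric `g` — encoded through its Dolbeault double complex
`A^{•,•} = Λ^{•,•}X` with `L²` inner ℂ product, conjugate-linear Hodge star `s = ∗̄_g`, adjoints
`∂* = −∗̄∂∗̄`, `∂̄* = −∗̄∂̄∗̄`, and the elliptic decomposition `ker Δ̃^{BC} ⊕ im Δ̃^{BC}` —
given finite-dimensional sub-complexes `B^{•,•} ⊆ C^{•,•} ⊆ Λ^{•,•}X` both closed under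
`∗̄_g`, if `B ↪ Λ^{•,•}X` induces an isomorphism in Bott-Chern cohomology, then so does
`C ↪ Λ^{•,•}X`. -/
theorem stmt_16 {V : Type*} [NormedAddCommGroup V] [InnerProductSpace ℂ V] (n : ℤ)
    (A B C : ℤ → ℤ → Submodule ℂ V) (d1 d2 d1s d2s : V →ₗ[ℂ] V) (s : V → V)
    (hA1 : ∀ p q : ℤ, ∀ x ∈ A p q, d1 x ∈ A (p + 1) q)
    (hA2 : ∀ p q : ℤ, ∀ x ∈ A p q, d2 x ∈ A p (q + 1))
    (hd1d1 : d1 ∘ₗ d1 = 0) (hd2d2 : d2 ∘ₗ d2 = 0)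
    (hanti : d1 ∘ₗ d2 + d2 ∘ₗ d1 = 0)
    (hbounds : ∀ p q : ℤ, (p < 0 ∨ q < 0 ∨ n < p ∨ n < q) → A p q = ⊥)
    (horth : ∀ p q p' q' : ℤ, (p, q) ≠ (p', q') →
      ∀ x ∈ A p q, ∀ y ∈ A p' q', (inner ℂ x y : ℂ) = 0)
    (hs_add : ∀ x y : V, s (x + y) = s x + s y)
    (hs_smul : ∀ (c : ℂ) (x : V), s (c • x) = (starRingEnd ℂ) c • s x)
    (hsgrad : ∀ p q : ℤ, ∀ x ∈ A p q, s x ∈ A (n - p) (n - q))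
    (hadj1 : ∀ x y : V, (inner ℂ (d1 x) y : ℂ) = inner ℂ x (d1s y))
    (hadj2 : ∀ x y : V, (inner ℂ (d2 x) y : ℂ) = inner ℂ x (d2s y))
    (hd1s : ∀ x : V, d1s x = -(s (d1 (s x))))
    (hd2s : ∀ x : V, d2s x = -(s (d2 (s x))))
    (hdec : IsCompl (LinearMap.ker (BCLap d1 d2 d1s d2s))
      (LinearMap.range (BCLap d1 d2 d1s d2s)))
    -- `C` is a finite-dimensional sub-complex closed under `∗̄_g`
    (hCA : ∀ p q : ℤ, C p q ≤ A p q)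
    (hC1 : ∀ p q : ℤ, ∀ x ∈ C p q, d1 x ∈ C (p + 1) q)
    (hC2 : ∀ p q : ℤ, ∀ x ∈ C p q, d2 x ∈ C p (q + 1))
    (hCfin : ∀ p q : ℤ, FiniteDimensional ℂ (C p q))
    (hCs : ∀ p q : ℤ, ∀ x ∈ C p q, s x ∈ C (n - p) (n - q))
    -- `B` is a further sub-complex of `C`, closed under `∗̄_g`
    (hBC : ∀ p q : ℤ, B p q ≤ C p q)
    (hB1 : ∀ p q : ℤ, ∀ x ∈ B p q, d1 x ∈ B (p + 1) q)
    (hB2 : ∀ p q : ℤ, ∀ x ∈ B p q, d2 x ∈ B p (q + 1))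
    (hBfin : ∀ p q : ℤ, FiniteDimensional ℂ (B p q))
    (hBs : ∀ p q : ℤ, ∀ x ∈ B p q, s x ∈ B (n - p) (n - q))
    -- `B ↪ Λ^{•,•}X` induces an isomorphism in Bott-Chern cohomology
    (hB_inj : ∀ p q : ℤ, ∀ x ∈ B p q, d1 x = 0 → d2 x = 0 →
      (∃ y ∈ A (p - 1) (q - 1), x = d1 (d2 y)) →
      ∃ y' ∈ B (p - 1) (q - 1), x = d1 (d2 y'))
    (hB_surj : ∀ p q : ℤ, ∀ x ∈ A p q, d1 x = 0 → d2 x = 0 →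
      ∃ b ∈ B p q, d1 b = 0 ∧ d2 b = 0 ∧ ∃ y ∈ A (p - 1) (q - 1), x - b = d1 (d2 y)) :
    -- conclusion: `C ↪ Λ^{•,•}X` induces an isomorphism in Bott-Chern cohomology
    (∀ p q : ℤ, ∀ x ∈ C p q, d1 x = 0 → d2 x = 0 →
      (∃ y ∈ A (p - 1) (q - 1), x = d1 (d2 y)) →
      ∃ y' ∈ C (p - 1) (q - 1), x = d1 (d2 y')) ∧
    (∀ p q : ℤ, ∀ x ∈ A p q, d1 x = 0 → d2 x = 0 →
      ∃ c ∈ C p q, d1 c = 0 ∧ d2 c = 0 ∧ ∃ y ∈ A (p - 1) (q - 1), x - c = d1 (d2 y)) := by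
  constructor
  · intro p q x hxC hx1 hx2 hexact
    obtain ⟨y, hy, hxy⟩ := hexact
    haveI := hCfin p q
    have hcast : ∀ (p₁ q₁ p₂ q₂ : ℤ) (v : V), p₁ = p₂ → q₁ = q₂ →
        v ∈ C p₁ q₁ → v ∈ C p₂ q₂ := by
      rintro p₁ q₁ _ _ v rfl rfl h; exact h
    have hC1s' : ∀ p q : ℤ, ∀ x ∈ C p q, d1s x ∈ C (p - 1) q := by
      intro p q x hx
      rw [hd1s]
      have h3 := hCs _ _ _ (hC1 _ _ _ (hCs _ _ _ hx))
      exact neg_mem (hcast _ _ _ _ _ (by ring) (by ring) h3)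
    have hC2s' : ∀ p q : ℤ, ∀ x ∈ C p q, d2s x ∈ C p (q - 1) := by
      intro p q x hx
      rw [hd2s]
      have h3 := hCs _ _ _ (hC2 _ _ _ (hCs _ _ _ hx))
      exact neg_mem (hcast _ _ _ _ _ (by ring) (by ring) h3)
    have hW : ∀ v ∈ C p q, BCLap d1 d2 d1s d2s v ∈ C p q := by
      intro v hv
      have m1 := hcast _ _ p q _ (by ring) (by ring)
        (hC1 _ _ _ (hC2 _ _ _ (hC2s' _ _ _ (hC1s' _ _ _ hv))))
      have m2 := hcast _ _ p q _ (by ring) (by ring)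
        (hC2s' _ _ _ (hC1s' _ _ _ (hC1 _ _ _ (hC2 _ _ _ hv))))
      have m3 := hcast _ _ p q _ (by ring) (by ring)
        (hC2s' _ _ _ (hC1 _ _ _ (hC1s' _ _ _ (hC2 _ _ _ hv))))
      have m4 := hcast _ _ p q _ (by ring) (by ring)
        (hC1s' _ _ _ (hC2 _ _ _ (hC2s' _ _ _ (hC1 _ _ _ hv))))
      have m5 := hcast _ _ p q _ (by ring) (by ring) (hC2s' _ _ _ (hC2 _ _ _ hv))
      have m6 := hcast _ _ p q _ (by ring) (by ring) (hC1s' _ _ _ (hC1 _ _ _ hv))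
      simp only [BCLap, LinearMap.add_apply, LinearMap.comp_apply]
      exact add_mem (add_mem (add_mem (add_mem (add_mem m1 m2) m3) m4) m5) m6
    obtain ⟨z, hz, hxz⟩ := aux_inj (C p q) d1 d2 d1s d2s hd1d1 hd2d2 hanti
      hadj1 hadj2 hW x hxC hx1 hx2 y hxy
    exact ⟨d2s (d1s z), hC2s' _ _ _ (hC1s' _ _ _ hz), hxz⟩
  · intro p q x hxA hx1 hx2
    obtain ⟨b, hbB, hb1, hb2, y, hyA, hxb⟩ := hB_surj p q x hxA hx1 hx2
    exact ⟨b, hBC p q hbB, hb1, hb2, y, hyA, hxb⟩
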